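/- arXiv:2006.08189 — 4 statements merged into one kernel-verified Lean document; each statement's English description precedes it below -/
import Mathlib

section
/- If n ≥ 2 and p ≥ 16(c1 + 1)·log(n)/(3n) for a fixed constant c1 > 0, then the empirical stochastic matrix S is row stochastic (i.e., all entries of S are nonnegative and every row of S sums to 1) with probability at least 1 − n^{−c1}. -/
open MeasureTheory ProbabilityTheory Filter
open scoped ENNReal Topology

noncomputable section

/-- Bernoulli measure on `Bool` with success probability `q`. -/
def bern (q : ℝ) : Measure Bool :=
  ENNReal.ofReal q • Measure.dirac true + ENNReal.ofReal (1 - q) • Measure.dirac false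

/-- Sample space of the BTL tournament model: skill parameters `ω.1`, edge indicators of the
Erdős–Rényi graph `ω.2.1` (read off the entries `(i,j)` with `i < j`), and game outcomes
`ω.2.2` (`ω.2.2 ((i,j), m) = true` iff `j` beats `i` in game `m`, for `i < j`). -/
abbrev BTLSpace (n k : ℕ) : Type :=
  (Fin n → ℝ) × ((Fin n × Fin n) → Bool) × (((Fin n × Fin n) × Fin k) → Bool)

/-- Joint law of the BTL model: the skills are i.i.d. with density `f`, independently each
edge is present with probability `p`, and conditionally on the skills `β` each game on an
edge `(i,j)` is won by `j` with probability `β j / (β i + β j)`, independently. -/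
def btlMeasure (n k : ℕ) (p : ℝ) (f : ℝ → ℝ) : Measure (BTLSpace n k) :=
  (Measure.pi fun _ : Fin n => volume.withDensity fun x => ENNReal.ofReal (f x)).bind fun β =>
    (Measure.dirac β).prod
      ((Measure.pi fun _ : Fin n × Fin n => bern p).prod
        (Measure.pi fun e : (Fin n × Fin n) × Fin k => bern (β e.1.2 / (β e.1.1 + β e.1.2))))

/-- The observation matrix `Z` (as a function `Fin n → Fin n → ℝ`). -/
def obs (n k : ℕ) (ω : BTLSpace n k) : Fin n → Fin n → ℝ := fun i j =>
  if i = j then 0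
  else if i < j then
    (if ω.2.1 (i, j) then (∑ m : Fin k, if ω.2.2 ((i, j), m) then (1 : ℝ) else 0) / k else 0)
  else
    (if ω.2.1 (j, i) then (∑ m : Fin k, if ω.2.2 ((j, i), m) then (0 : ℝ) else 1) / k else 0)

/-- The empirical stochastic matrix `S` built from the observation matrix `Z`. -/
def empS (n : ℕ) (p : ℝ) (Z : Fin n → Fin n → ℝ) : Fin n → Fin n → ℝ :=
  fun i j => if i = j then 1 - (∑ r, Z i r) / (2 * n * p) else Z i j / (2 * n * p)

/-- A square matrix is row stochastic if it has nonnegative entries and unit row sums. -/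
def IsRowStochastic {n : ℕ} (S : Fin n → Fin n → ℝ) : Prop :=
  (∀ i j, 0 ≤ S i j) ∧ ∀ i, ∑ j, S i j = 1

open scoped Classical in
/-- The rank centrality estimator: an invariant distribution of `S` in the probability
simplex if one exists (in particular whenever `S` is row stochastic), and an arbitrary
element of the simplex otherwise. -/
def rankCentrality (n : ℕ) (S : Fin n → Fin n → ℝ) : Fin n → ℝ :=
  if h : ∃ v, v ∈ stdSimplex ℝ (Fin n) ∧ Matrix.vecMul v (Matrix.of S) = v then h.choose
  else fun _ => (n : ℝ)⁻¹

/-- ℓ^∞ norm of a vector. -/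
def linfty {n : ℕ} (v : Fin n → ℝ) : ℝ := ⨆ i, |v i|

/-- ℓ^1 norm of a vector. -/
def l1 {n : ℕ} (v : Fin n → ℝ) : ℝ := ∑ i, |v i|

/-- Canonically scaled skill parameters `π(i) = α_i / (α_1 + ⋯ + α_n)`. -/
def piVec {n : ℕ} (β : Fin n → ℝ) : Fin n → ℝ := fun i => β i / ∑ j, β j

/-- Estimated skill parameters `α̂_i = π̂*(i) / ‖π̂*‖_∞`. -/
def alphaHat (n k : ℕ) (p : ℝ) (ω : BTLSpace n k) : Fin n → ℝ := fun i =>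
  rankCentrality n (empS n p (obs n k ω)) i / linfty (rankCentrality n (empS n p (obs n k ω)))

/-- The nonparametric class `𝒫(δ, ε, b, η, L1, B)` of skill densities. -/
def SkillClass (δ ε b η L1 B : ℝ) : Set (ℝ → ℝ) :=
  { f | Measurable f ∧ (∀ x, 0 ≤ f x) ∧
    IsProbabilityMeasure (volume.withDensity fun x => ENNReal.ofReal (f x)) ∧
    (∀ x, x ∉ Set.Icc δ 1 → f x = 0) ∧
    (∀ x ∈ Set.Icc δ 1, f x ≤ B) ∧
    ContDiffOn ℝ (⌈η⌉₊ - 1 : ℕ) f (Set.Icc δ 1) ∧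
    (∀ x ∈ Set.Icc δ 1, ∀ y ∈ Set.Icc δ 1,
      |iteratedDerivWithin (⌈η⌉₊ - 1) f (Set.Icc δ 1) x -
        iteratedDerivWithin (⌈η⌉₊ - 1) f (Set.Icc δ 1) y| ≤
          L1 * |x - y| ^ (η - ((⌈η⌉₊ - 1 : ℕ) : ℝ))) ∧
    (∀ x ∈ Set.Icc (1 - ε) 1, b ≤ f x) }

namespace BTLAux
open MeasureTheory

noncomputable def bw (q : ℝ) (b : Bool) : ℝ≥0∞ :=
  if b then ENNReal.ofReal q else ENNReal.ofReal (1 - q)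

lemma bern_apply (q : ℝ) (s : Set Bool) :
    bern q s = (ENNReal.ofReal q) * s.indicator 1 true
      + (ENNReal.ofReal (1 - q)) * s.indicator 1 false := by
  have hs : MeasurableSet s := MeasurableSpace.measurableSet_top
  simp [bern, Measure.dirac_apply' _ hs]

lemma bern_singleton (q : ℝ) (b : Bool) : bern q {b} = bw q b := by
  cases b <;> simp [bern_apply, bw, Set.indicator]

lemma bern_univ (q : ℝ) : bern q Set.univ = ENNReal.ofReal q + ENNReal.ofReal (1 - q) := by
  simp [bern_apply]

instance bern_finite (q : ℝ) : IsFiniteMeasure (bern q) :=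
  ⟨by rw [bern_univ]; exact ENNReal.add_lt_top.2 ⟨ENNReal.ofReal_lt_top, ENNReal.ofReal_lt_top⟩⟩

lemma one_le_bern_univ (q : ℝ) : 1 ≤ bern q Set.univ := by
  rw [bern_univ]
  rcases le_total q 0 with h | h
  · calc (1:ℝ≥0∞) = ENNReal.ofReal 1 := by simp
      _ ≤ ENNReal.ofReal (1 - q) := ENNReal.ofReal_le_ofReal (by linarith)
      _ ≤ _ := le_add_self
  · rcases le_total 1 q with h1 | h1
    · calc (1:ℝ≥0∞) = ENNReal.ofReal 1 := by simp
        _ ≤ ENNReal.ofReal q := ENNReal.ofReal_le_ofReal h1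
        _ ≤ _ := le_self_add
    · rw [← ENNReal.ofReal_add h (by linarith)]
      simp

lemma bern_prob {q : ℝ} (h0 : 0 ≤ q) (h1 : q ≤ 1) : IsProbabilityMeasure (bern q) :=
  ⟨by rw [bern_univ, ← ENNReal.ofReal_add h0 (by linarith)]; simp⟩

variable {ι : Type*} [Fintype ι] [DecidableEq ι]

lemma pi_bern (q : ι → ℝ) :
    (Measure.pi fun i => bern (q i)) =
      ∑ g : ι → Bool, (∏ i, bw (q i) (g i)) • Measure.dirac g := by
  have h := Measure.sum_smul_dirac (Measure.pi fun i => bern (q i))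
  rw [Measure.sum_fintype] at h
  rw [← h]
  refine Finset.sum_congr rfl fun g _ => ?_
  congr 1
  have : ({g} : Set (ι → Bool)) = Set.pi Set.univ (fun i => {g i}) := by
    ext y; simp [funext_iff, Set.mem_pi]
  rw [this, Measure.pi_pi]
  exact Finset.prod_congr rfl fun i _ => bern_singleton _ _

lemma lintegral_pi_bern (q : ι → ℝ) (h : (ι → Bool) → ℝ≥0∞) :
    ∫⁻ y, h y ∂(Measure.pi fun i => bern (q i)) =
      ∑ g : ι → Bool, (∏ i, bw (q i) (g i)) * h g := by
  rw [pi_bern, lintegral_finset_sum_measure]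
  refine Finset.sum_congr rfl fun g _ => ?_
  rw [lintegral_smul_measure, lintegral_dirac, smul_eq_mul]

lemma pi_bern_finite (q : ι → ℝ) : IsFiniteMeasure (Measure.pi fun i => bern (q i)) := by
  constructor
  rw [pi_bern]
  simp only [Measure.coe_finset_sum, Finset.sum_apply, Measure.smul_apply, smul_eq_mul]
  refine ENNReal.sum_lt_top.2 fun g _ => ?_
  exact ENNReal.mul_lt_top (ENNReal.prod_lt_top (fun i _ => by
    unfold bw; split <;> exact ENNReal.ofReal_lt_top)) (by simp)

lemma lintegral_prod_pi_bern (q : ι → ℝ) (F : ι → Bool → ℝ≥0∞) :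
    ∫⁻ y, ∏ i, F i (y i) ∂(Measure.pi fun i => bern (q i)) =
      ∏ i, (bw (q i) true * F i true + bw (q i) false * F i false) := by
  classical
  rw [lintegral_pi_bern]
  have h : ∀ g : ι → Bool, (∏ i, bw (q i) (g i)) * ∏ i, F i (g i)
      = ∏ i, (bw (q i) (g i) * F i (g i)) := fun g => (Finset.prod_mul_distrib).symm
  simp_rw [h]
  rw [← Fintype.prod_sum (fun i b => bw (q i) b * F i b)]
  refine Finset.prod_congr rfl fun i _ => ?_
  rw [Fintype.sum_bool]

omit [DecidableEq ι] in
lemma one_le_pi_bern_univ (q : ι → ℝ) :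
    1 ≤ (Measure.pi fun i => bern (q i)) Set.univ := by
  rw [Measure.pi_univ]
  exact Finset.one_le_prod' fun i _ => one_le_bern_univ (q i)

lemma measurable_btl_kernel {α Y : Type*} [MeasurableSpace α] [MeasurableSpace Y]
    (G : Measure Y) [SFinite G]
    (Q : α → ι → ℝ) (hQ : ∀ i, Measurable fun a => Q a i) :
    Measurable fun a =>
      (Measure.dirac a).prod (G.prod (Measure.pi fun i => bern (Q a i))) := by
  apply Measure.measurable_of_measurable_coe
  intro s hs
  have key : ∀ a, (Measure.dirac a).prod (G.prod (Measure.pi fun i => bern (Q a i))) s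
      = ∑ g : ι → Bool, (∏ i, bw (Q a i) (g i)) *
          (G.prod (Measure.dirac g)) (Prod.mk a ⁻¹' s) := by
    intro a
    haveI : IsFiniteMeasure (Measure.pi fun i => bern (Q a i)) := pi_bern_finite _
    rw [Measure.prod_apply hs]
    rw [lintegral_dirac' a (measurable_measure_prodMk_left hs)]
    have ht : MeasurableSet (Prod.mk a ⁻¹' s) := hs.preimage measurable_prodMk_left
    rw [Measure.prod_apply ht]
    have hpt : ∀ y : Y, (Measure.pi fun i => bern (Q a i)) (Prod.mk y ⁻¹' (Prod.mk a ⁻¹' s))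
        = ∑ g : ι → Bool, (∏ i, bw (Q a i) (g i)) *
            Measure.dirac g (Prod.mk y ⁻¹' (Prod.mk a ⁻¹' s)) := by
      intro y
      rw [pi_bern]
      simp
    simp_rw [hpt]
    rw [lintegral_finset_sum _ (fun g _ =>
      (measurable_measure_prodMk_left ht).const_mul _)]
    refine Finset.sum_congr rfl fun g _ => ?_
    rw [lintegral_const_mul _ (measurable_measure_prodMk_left ht)]
    rw [Measure.prod_apply ht]
  simp_rw [key]
  refine Finset.measurable_sum _ fun g _ => Measurable.mul ?_ ?_
  · refine Finset.measurable_prod _ fun i _ => ?_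
    unfold bw
    cases hgi : g i
    · simp only [Bool.false_eq_true, if_false]
      exact ENNReal.measurable_ofReal.comp ((measurable_const.sub (hQ i)))
    · simp only [if_true]
      exact ENNReal.measurable_ofReal.comp (hQ i)
  · exact measurable_measure_prodMk_left hs

/-! ### Degree counts on the random graph -/

def pairF {n : ℕ} (i r : Fin n) : Fin n × Fin n := if i < r then (i, r) else (r, i)

noncomputable def eI {n : ℕ} (i r : Fin n) (y : (Fin n × Fin n) → Bool) : ℝ :=
  if i = r then 0 else (if y (pairF i r) then 1 else 0)

noncomputable def D {n : ℕ} (i : Fin n) (y : (Fin n × Fin n) → Bool) : ℝ := ∑ r, eI i r y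

lemma measurable_D {n : ℕ} (i : Fin n) : Measurable (D (n := n) i) := by
  refine Finset.measurable_sum _ fun r _ => ?_
  unfold eI
  rcases eq_or_ne i r with h | h
  · simp only [if_pos h]; exact measurable_const
  · simp only [if_neg h]
    exact (measurable_of_countable (fun b : Bool => if b then (1:ℝ) else 0)).comp
      (measurable_pi_apply _)

lemma pairF_injOn {n : ℕ} (i : Fin n) :
    ∀ x ∈ Finset.univ.erase i, ∀ y ∈ Finset.univ.erase i,
      pairF i x = pairF i y → x = y := by
  intro x hx y hy h
  have hxne : x ≠ i := (Finset.mem_erase.1 hx).1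
  have hyne : y ≠ i := (Finset.mem_erase.1 hy).1
  unfold pairF at h
  split_ifs at h <;> rw [Prod.ext_iff] at h <;> simp_all

lemma eI_eq_of_ne {n : ℕ} {i r : Fin n} (h : r ≠ i) (y : (Fin n × Fin n) → Bool) :
    eI i r y = if y (pairF i r) then 1 else 0 := by
  unfold eI
  rw [if_neg (Ne.symm h)]

end BTLAux
namespace BTLAux
open MeasureTheory

def rowCond {n : ℕ} (i : Fin n) (e : Fin n × Fin n) : Prop :=
  (e.1 = i ∧ i < e.2) ∨ (e.2 = i ∧ e.1 < i)

instance {n : ℕ} (i : Fin n) (e : Fin n × Fin n) : Decidable (rowCond i e) := by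
  unfold rowCond; infer_instance

noncomputable def FFd {n : ℕ} (i : Fin n) (e : Fin n × Fin n) (b : Bool) : ℝ≥0∞ :=
  if rowCond i e then (if b then 2 else 1) else 1

noncomputable def fEd {n : ℕ} (i : Fin n) (y : (Fin n × Fin n) → Bool) : ℝ≥0∞ :=
  ∏ e, FFd i e (y e)

def Td {n : ℕ} (i : Fin n) : Finset (Fin n × Fin n) :=
  Finset.univ.filter fun e => rowCond i e

lemma Td_eq_image {n : ℕ} (i : Fin n) :
    Td i = Finset.image (fun r => pairF i r) (Finset.univ.erase i) := by
  ext e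
  rw [Td, Finset.mem_filter]
  simp only [Td, rowCond, Finset.mem_filter, Finset.mem_image, Finset.mem_erase,
    Finset.mem_univ, true_and, and_true]
  constructor
  · rintro (⟨h1, h2⟩ | ⟨h1, h2⟩)
    · exact ⟨e.2, h2.ne', by unfold pairF; rw [if_pos h2]; exact Prod.ext h1.symm rfl⟩
    · exact ⟨e.1, h2.ne, by unfold pairF; rw [if_neg (not_lt.2 h2.le)]; exact Prod.ext rfl h1.symm⟩
  · rintro ⟨r, hr, rfl⟩
    rcases hr.lt_or_gt with h | h
    · right; unfold pairF; rw [if_neg (not_lt.2 h.le)]; exact ⟨rfl, h⟩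
    · left; unfold pairF; rw [if_pos h]; exact ⟨rfl, h⟩

lemma FFd_true {n : ℕ} (i : Fin n) (e : Fin n × Fin n) :
    FFd i e true = if rowCond i e then 2 else 1 := by
  unfold FFd; split <;> simp

lemma FFd_false {n : ℕ} (i : Fin n) (e : Fin n × Fin n) : FFd i e false = 1 := by
  unfold FFd; split <;> simp

lemma fEd_eq_prod_Td {n : ℕ} (i : Fin n) (y : (Fin n × Fin n) → Bool) :
    fEd i y = ∏ e ∈ Td i, (if y e then (2:ℝ≥0∞) else 1) := by
  rw [Td, Finset.prod_filter, fEd]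
  refine Finset.prod_congr rfl fun e _ => ?_
  unfold FFd
  by_cases hc : rowCond i e
  · rw [if_pos hc]
  · rw [if_neg hc]

lemma chernoff_row {n : ℕ} {p : ℝ} (hp0 : 0 < p) (hp1 : p ≤ 1) (i : Fin n)
    {a : ℝ} (ha0 : 0 ≤ a)
    (hreal : Real.exp (n * p) ≤ a * Real.exp (Real.log 2 * (2 * n * p))) :
    (Measure.pi fun _ : Fin n × Fin n => bern p) {y | 2 * n * p < D i y}
      ≤ ENNReal.ofReal a := by
  classical
  have hfE_meas : Measurable (fEd i) :=
    Finset.measurable_prod _ fun e _ =>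
      (measurable_of_countable (FFd i e)).comp (measurable_pi_apply e)
  have hcardT : (Td i).card ≤ n := by
    rw [Td_eq_image i]
    calc (Finset.image (fun r => pairF i r) (Finset.univ.erase i)).card
        ≤ (Finset.univ.erase i).card := Finset.card_image_le
      _ ≤ (Finset.univ : Finset (Fin n)).card := Finset.card_le_card (Finset.erase_subset _ _)
      _ = n := by simp
  -- pointwise identity for fEd
  have hfE_eq : ∀ y, fEd i y = ENNReal.ofReal (Real.exp (Real.log 2 * D i y)) := by
    intro y
    rw [fEd_eq_prod_Td, Td_eq_image i, Finset.prod_image (pairF_injOn i)]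
    have h2 : D i y = ∑ r ∈ Finset.univ.erase i, (if y (pairF i r) then (1:ℝ) else 0) := by
      unfold D
      rw [show (∑ r ∈ Finset.univ.erase i, (if y (pairF i r) then (1:ℝ) else 0))
          = ∑ r ∈ Finset.univ.erase i, eI i r y from
        Finset.sum_congr rfl fun r hr => (eI_eq_of_ne (Finset.mem_erase.1 hr).1 y).symm]
      exact (Finset.sum_erase _ (by simp [eI])).symm
    rw [h2, Finset.mul_sum, Real.exp_sum,
      ENNReal.ofReal_prod_of_nonneg (fun _ _ => (Real.exp_pos _).le)]
    refine Finset.prod_congr rfl fun r _ => ?_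
    by_cases hy : y (pairF i r)
    · rw [if_pos hy, if_pos hy, mul_one, Real.exp_log (by norm_num : (0:ℝ) < 2)]
      norm_num
    · rw [if_neg hy, if_neg hy, mul_zero, Real.exp_zero]
      norm_num
  -- the MGF computation
  have hMGF : ∫⁻ y, fEd i y ∂(Measure.pi fun _ : Fin n × Fin n => bern p)
      ≤ ENNReal.ofReal (Real.exp (n * p)) := by
    have h0 := lintegral_prod_pi_bern (fun _ : Fin n × Fin n => p) (FFd i)
    rw [show (fun y => fEd i y) = fun y => ∏ e, FFd i e (y e) from rfl]
    rw [h0]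
    have hbt : bw p true = ENNReal.ofReal p := by simp [bw]
    have hbf : bw p false = ENNReal.ofReal (1 - p) := by simp [bw]
    have hterm : ∀ e : Fin n × Fin n,
        bw p true * FFd i e true + bw p false * FFd i e false =
          if rowCond i e then ENNReal.ofReal (1 + p) else 1 := by
      intro e
      rw [FFd_true, FFd_false, hbt, hbf, mul_one]
      by_cases hc : rowCond i e
      · rw [if_pos hc, if_pos hc, show (2:ℝ≥0∞) = ENNReal.ofReal 2 by norm_num,
          ← ENNReal.ofReal_mul hp0.le, ← ENNReal.ofReal_add (by positivity) (by linarith)]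
        congr 1; ring
      · rw [if_neg hc, if_neg hc, mul_one, ← ENNReal.ofReal_add hp0.le (by linarith)]
        norm_num
    rw [Finset.prod_congr rfl fun e _ => hterm e]
    rw [← Finset.prod_filter,
      show (Finset.univ.filter fun e : Fin n × Fin n => rowCond i e) = Td i from rfl,
      Finset.prod_const]
    rw [← ENNReal.ofReal_pow (by linarith)]
    apply ENNReal.ofReal_le_ofReal
    calc (1 + p) ^ (Td i).card ≤ Real.exp p ^ (Td i).card := by
          apply pow_le_pow_left₀ (by linarith)
          linarith [Real.add_one_le_exp p]
      _ ≤ Real.exp p ^ n := pow_le_pow_right₀ (Real.one_le_exp hp0.le) hcardT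
      _ = Real.exp (n * p) := (Real.exp_nat_mul p n).symm
  -- Markov
  set ε : ℝ≥0∞ := ENNReal.ofReal (Real.exp (Real.log 2 * (2 * n * p))) with hεdef
  have hsub : {y : (Fin n × Fin n) → Bool | 2 * n * p < D i y} ⊆ {y | ε ≤ fEd i y} := by
    intro y hy
    rw [Set.mem_setOf_eq, hfE_eq y, hεdef]
    exact ENNReal.ofReal_le_ofReal (Real.exp_le_exp.2
      (mul_le_mul_of_nonneg_left (le_of_lt hy) (Real.log_nonneg one_le_two)))
  have hmarkov : ε * (Measure.pi fun _ : Fin n × Fin n => bern p) {y | ε ≤ fEd i y}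
      ≤ ∫⁻ y, fEd i y ∂(Measure.pi fun _ : Fin n × Fin n => bern p) :=
    mul_meas_ge_le_lintegral₀ hfE_meas.aemeasurable ε
  have hε0 : ε ≠ 0 := by
    rw [hεdef]
    exact (ENNReal.ofReal_pos.2 (Real.exp_pos _)).ne'
  have hεtop : ε ≠ ⊤ := ENNReal.ofReal_ne_top
  have hchain : ε * (Measure.pi fun _ : Fin n × Fin n => bern p) {y | ε ≤ fEd i y}
      ≤ ENNReal.ofReal a * ε := by
    refine hmarkov.trans (hMGF.trans ?_)
    rw [hεdef, ← ENNReal.ofReal_mul ha0]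
    exact ENNReal.ofReal_le_ofReal hreal
  have hfinal : (Measure.pi fun _ : Fin n × Fin n => bern p) {y | ε ≤ fEd i y}
      ≤ ENNReal.ofReal a := by
    rw [mul_comm] at hchain
    exact (ENNReal.mul_le_mul_iff_left hε0 hεtop).1 hchain
  exact (measure_mono hsub).trans hfinal

end BTLAux
namespace BTLAux
open MeasureTheory

lemma obs_nonneg (n k : ℕ) (ω : BTLSpace n k) (i j : Fin n) : 0 ≤ obs n k ω i j := by
  unfold obs
  have hs : ∀ (e : Fin n × Fin n),
      0 ≤ (∑ m : Fin k, if ω.2.2 (e, m) then (1:ℝ) else 0) / k :=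
    fun e => div_nonneg (Finset.sum_nonneg fun m _ => by split <;> norm_num) (Nat.cast_nonneg k)
  have hs' : ∀ (e : Fin n × Fin n),
      0 ≤ (∑ m : Fin k, if ω.2.2 (e, m) then (0:ℝ) else 1) / k :=
    fun e => div_nonneg (Finset.sum_nonneg fun m _ => by split <;> norm_num) (Nat.cast_nonneg k)
  split_ifs <;> first | exact hs _ | exact hs' _ | norm_num

lemma obs_le_eI (n k : ℕ) (hk : 1 ≤ k) (ω : BTLSpace n k) (i j : Fin n) :
    obs n k ω i j ≤ eI i j ω.2.1 := by
  have hk' : (0:ℝ) < k := by exact_mod_cast Nat.pos_of_ne_zero (by omega)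
  have hb1 : (∑ m : Fin k, if ω.2.2 ((i, j), m) then (1:ℝ) else 0) / k ≤ 1 := by
    rw [div_le_one hk']
    calc (∑ m : Fin k, if ω.2.2 ((i, j), m) then (1:ℝ) else 0)
        ≤ ∑ _m : Fin k, (1:ℝ) := Finset.sum_le_sum fun m _ => by split <;> norm_num
      _ = k := by simp
  have hb2 : (∑ m : Fin k, if ω.2.2 ((j, i), m) then (0:ℝ) else 1) / k ≤ 1 := by
    rw [div_le_one hk']
    calc (∑ m : Fin k, if ω.2.2 ((j, i), m) then (0:ℝ) else 1)
        ≤ ∑ _m : Fin k, (1:ℝ) := Finset.sum_le_sum fun m _ => by split <;> norm_num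
      _ = k := by simp
  unfold obs eI pairF
  rcases eq_or_ne i j with h | h
  · simp [h]
  · rw [if_neg h, if_neg h]
    rcases h.lt_or_gt with hlt | hlt
    · rw [if_pos hlt, if_pos hlt]
      by_cases he : ω.2.1 (i, j)
      · rw [if_pos he, if_pos he]
        exact hb1
      · rw [if_neg he, if_neg he]
    · rw [if_neg (asymm hlt), if_neg (asymm hlt)]
      by_cases he : ω.2.1 (j, i)
      · rw [if_pos he, if_pos he]
        exact hb2
      · rw [if_neg he, if_neg he]

lemma rowstoch (n k : ℕ) (hk : 1 ≤ k) (p : ℝ) (hc : 0 < 2 * (n:ℝ) * p) (ω : BTLSpace n k)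
    (hω : ∀ i : Fin n, D i ω.2.1 ≤ 2 * n * p) :
    IsRowStochastic (empS n p (obs n k ω)) := by
  have hsum : ∀ i, ∑ r, obs n k ω i r ≤ 2 * (n:ℝ) * p := fun i =>
    le_trans (Finset.sum_le_sum fun r _ => obs_le_eI n k hk ω i r) (hω i)
  constructor
  · intro i j
    unfold empS
    split_ifs with h
    · have h2 : (∑ r, obs n k ω i r) / (2 * n * p) ≤ 1 := (div_le_one hc).2 (hsum i)
      linarith
    · exact div_nonneg (obs_nonneg n k ω i j) hc.le
  · intro i
    unfold empS
    have hdiag : obs n k ω i i = 0 := by unfold obs; simp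
    have hsplit : ∀ j : Fin n,
        (if i = j then 1 - (∑ r, obs n k ω i r) / (2 * n * p) else obs n k ω i j / (2 * n * p))
          = (if i = j then 1 - (∑ r, obs n k ω i r) / (2 * n * p) else 0)
            + (if i = j then 0 else obs n k ω i j / (2 * n * p)) := by
      intro j; split_ifs <;> ring
    rw [Finset.sum_congr rfl fun j _ => hsplit j, Finset.sum_add_distrib]
    rw [Finset.sum_ite_eq]
    have h2 : (∑ j : Fin n, if i = j then 0 else obs n k ω i j / (2 * n * p))
        = (∑ j : Fin n, obs n k ω i j) / (2 * n * p) := by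
      rw [Finset.sum_div]
      refine Finset.sum_congr rfl fun j _ => ?_
      rcases eq_or_ne i j with h | h
      · rw [if_pos h, ← h, hdiag, zero_div]
      · rw [if_neg h]
    rw [h2, if_pos (Finset.mem_univ i)]
    ring

end BTLAux

/-- **The empirical matrix is row stochastic with high probability** (Proposition 1 of the
paper): if `n ≥ 2` and `p ≥ 16(c1+1)·log(n)/(3n)`, then under the BTL tournament model the
empirical stochastic matrix `S` is row stochastic with probability at least `1 − n^{−c1}`. -/
theorem empirical_matrix_row_stochastic (n k : ℕ) (hn : 2 ≤ n) (hk : 1 ≤ k)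
    (δ p : ℝ) (hδ : δ ∈ Set.Ioo (0 : ℝ) 1) (hp : p ∈ Set.Ioc (0 : ℝ) 1)
    (c1 : ℝ) (hc1 : 0 < c1)
    (hplarge : 16 * (c1 + 1) * Real.log n / (3 * n) ≤ p)
    (f : ℝ → ℝ) (hfm : Measurable f) (hf0 : ∀ x, 0 ≤ f x)
    (hfprob : IsProbabilityMeasure (volume.withDensity fun x => ENNReal.ofReal (f x)))
    (hfsupp : ∀ x, x ∉ Set.Icc δ 1 → f x = 0) :
    ENNReal.ofReal (1 - (n : ℝ) ^ (-c1)) ≤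
      btlMeasure n k p f {ω | IsRowStochastic (empS n p (obs n k ω))} := by
  classical
  obtain ⟨hδ0, hδ1⟩ := hδ
  obtain ⟨hp0, hp1⟩ := hp
  have hn2 : (2:ℝ) ≤ (n:ℝ) := by exact_mod_cast hn
  have hn0 : (0:ℝ) < n := by linarith
  have hn1 : (1:ℝ) < n := by linarith
  have hppos : 0 < 2 * (n:ℝ) * p := by positivity
  have hlogn : 0 < Real.log n := Real.log_pos hn1
  have hnp : 16 * (c1 + 1) * Real.log n / 3 ≤ (n:ℝ) * p := by
    have h := mul_le_mul_of_nonneg_left hplarge (le_of_lt hn0)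
    have hne : (n:ℝ) ≠ 0 := hn0.ne'
    calc 16 * (c1 + 1) * Real.log n / 3
        = (n:ℝ) * (16 * (c1 + 1) * Real.log n / (3 * n)) := by field_simp
      _ ≤ (n:ℝ) * p := h
  have hlog2 : (0.6931471803 : ℝ) < Real.log 2 := Real.log_two_gt_d9
  set a : ℝ := (n:ℝ) ^ (-(c1+1)) with hadef
  have ha0 : 0 ≤ a := Real.rpow_nonneg hn0.le _
  have hreal : Real.exp (n * p) ≤ a * Real.exp (Real.log 2 * (2 * n * p)) := by
    rw [hadef, Real.rpow_def_of_pos hn0, ← Real.exp_add]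
    apply Real.exp_le_exp.2
    have hK : 0 ≤ (c1 + 1) * Real.log n := by positivity
    nlinarith [mul_le_mul_of_nonneg_right hnp
      (show (0:ℝ) ≤ 2 * Real.log 2 - 1 by nlinarith)]
  haveI hbp : IsProbabilityMeasure (bern p) := BTLAux.bern_prob hp0.le hp1
  haveI : ∀ i : Fin n, IsProbabilityMeasure
      ((fun _ : Fin n => volume.withDensity fun x => ENNReal.ofReal (f x)) i) := fun _ => hfprob
  set μ0 : Measure (Fin n → ℝ) :=
    Measure.pi fun _ : Fin n => volume.withDensity fun x => ENNReal.ofReal (f x) with hμ0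
  haveI : IsProbabilityMeasure μ0 := by rw [hμ0]; infer_instance
  set G : Measure ((Fin n × Fin n) → Bool) :=
    Measure.pi fun _ : Fin n × Fin n => bern p with hGdef
  haveI : IsProbabilityMeasure G := by rw [hGdef]; infer_instance
  set GY : Set ((Fin n × Fin n) → Bool) :=
    {y | ∀ i : Fin n, BTLAux.D i y ≤ 2 * n * p} with hGY
  have hGYeq : GY = ⋂ i : Fin n, {y | BTLAux.D i y ≤ 2 * n * p} := by
    ext y; simp [hGY]
  have hGYm : MeasurableSet GY := by
    rw [hGYeq]
    exact MeasurableSet.iInter fun i =>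
      measurableSet_le (BTLAux.measurable_D i) measurable_const
  have hcompl : G GYᶜ ≤ ENNReal.ofReal ((n:ℝ) ^ (-c1)) := by
    have hc : GYᶜ = ⋃ i : Fin n, {y | 2 * n * p < BTLAux.D i y} := by
      ext y; simp [hGY, not_le]
    rw [hc]
    calc G (⋃ i : Fin n, {y | 2 * n * p < BTLAux.D i y})
        ≤ ∑' i : Fin n, G {y | 2 * n * p < BTLAux.D i y} := measure_iUnion_le _
      _ = ∑ i : Fin n, G {y | 2 * n * p < BTLAux.D i y} := tsum_fintype _
      _ ≤ ∑ _i : Fin n, ENNReal.ofReal a := Finset.sum_le_sum fun i _ => by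
          rw [hGdef]; exact BTLAux.chernoff_row hp0 hp1 i ha0 hreal
      _ = (n : ℝ≥0∞) * ENNReal.ofReal a := by
          rw [Finset.sum_const, Finset.card_univ, Fintype.card_fin, nsmul_eq_mul]
      _ = ENNReal.ofReal ((n:ℝ) * a) := by
          rw [← ENNReal.ofReal_natCast n, ← ENNReal.ofReal_mul (Nat.cast_nonneg n)]
      _ = ENNReal.ofReal ((n:ℝ) ^ (-c1)) := by
          congr 1
          rw [hadef]
          rw [show (n:ℝ) * (n:ℝ) ^ (-(c1+1)) = (n:ℝ) ^ ((1:ℝ) + -(c1+1)) by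
            rw [Real.rpow_add hn0, Real.rpow_one]]
          norm_num
  have hGYlb : ENNReal.ofReal (1 - (n:ℝ) ^ (-c1)) ≤ G GY := by
    have hx0 : 0 ≤ (n:ℝ) ^ (-c1) := Real.rpow_nonneg hn0.le _
    have h1 : ENNReal.ofReal (1 - (n:ℝ) ^ (-c1))
        = 1 - ENNReal.ofReal ((n:ℝ) ^ (-c1)) := by
      refine ENNReal.eq_sub_of_add_eq ENNReal.ofReal_ne_top ?_
      rw [← ENNReal.ofReal_add _ hx0]
      · norm_num
      · have : (n:ℝ) ^ (-c1) ≤ 1 :=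
          Real.rpow_le_one_of_one_le_of_nonpos hn1.le (by linarith)
        linarith
    have h2 : G GY = 1 - G GYᶜ := by
      refine ENNReal.eq_sub_of_add_eq (measure_ne_top _ _) ?_
      rw [measure_add_measure_compl hGYm]
      exact measure_univ
    rw [h1, h2]
    exact tsub_le_tsub_left hcompl 1
  set Gset : Set (BTLSpace n k) := {ω : BTLSpace n k | ω.2.1 ∈ GY} with hGset
  have hGsetm : MeasurableSet Gset := hGYm.preimage (measurable_fst.comp measurable_snd)
  have hsub : Gset ⊆ {ω | IsRowStochastic (empS n p (obs n k ω))} := fun ω hω =>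
    BTLAux.rowstoch n k hk p hppos ω hω
  have hker : Measurable fun β : Fin n → ℝ =>
      (Measure.dirac β).prod (G.prod (Measure.pi fun e : (Fin n × Fin n) × Fin k =>
        bern (β e.1.2 / (β e.1.1 + β e.1.2)))) :=
    BTLAux.measurable_btl_kernel G _ (fun e =>
      Measurable.div (measurable_pi_apply _)
        ((measurable_pi_apply _).add (measurable_pi_apply _)))
  have hbind : btlMeasure n k p f Gset
      = ∫⁻ β, ((Measure.dirac β).prod (G.prod (Measure.pi fun e : (Fin n × Fin n) × Fin k =>
          bern (β e.1.2 / (β e.1.1 + β e.1.2))))) Gset ∂μ0 :=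
    Measure.bind_apply hGsetm hker.aemeasurable
  have hFeval : ∀ β : Fin n → ℝ, G GY ≤
      ((Measure.dirac β).prod (G.prod (Measure.pi fun e : (Fin n × Fin n) × Fin k =>
        bern (β e.1.2 / (β e.1.1 + β e.1.2))))) Gset := by
    intro β
    haveI : IsFiniteMeasure (Measure.pi fun e : (Fin n × Fin n) × Fin k =>
        bern (β e.1.2 / (β e.1.1 + β e.1.2))) := BTLAux.pi_bern_finite _
    have hset : Gset = Set.univ ×ˢ (GY ×ˢ Set.univ) := by
      ext ⟨b, y, z⟩; simp [hGset]
    rw [hset, Measure.prod_prod, Measure.prod_prod, measure_univ, one_mul]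
    calc G GY = G GY * 1 := (mul_one _).symm
      _ ≤ _ := mul_le_mul_right (BTLAux.one_le_pi_bern_univ _) _
  calc ENNReal.ofReal (1 - (n:ℝ) ^ (-c1)) ≤ G GY := hGYlb
    _ = ∫⁻ _, G GY ∂μ0 := by rw [lintegral_const, measure_univ, mul_one]
    _ ≤ ∫⁻ β, ((Measure.dirac β).prod (G.prod (Measure.pi
          fun e : (Fin n × Fin n) × Fin k =>
            bern (β e.1.2 / (β e.1.1 + β e.1.2))))) Gset ∂μ0 :=
        lintegral_mono hFeval
    _ = btlMeasure n k p f Gset := hbind.symm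
    _ ≤ btlMeasure n k p f {ω | IsRowStochastic (empS n p (obs n k ω))} :=
        measure_mono hsub


end
end

section
/- Let n ≥ 1, δ ∈ (0,1), k ∈ ℕ, q > 0, and let G be a simple undirected graph on vertex set [n] with |G| edges. Let β = (β_1,…,β_n) and γ = (γ_1,…,γ_n) be vectors in [δ,1]^n such that |β_i − γ_i| ≤ (1−δ)/n^q for every i ∈ [n]. Then k · Σ_{{i,j} ∈ G, i < j} D( β_j/(β_i + β_j) ‖ γ_j/(γ_i + γ_j) ) ≤ ((1−δ)²/(4δ²)) · (2 + δ + 1/δ) · k·|G| / n^{2q}. -/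
set_option maxHeartbeats 800000

/-- Binary Kullback–Leibler divergence `D(a‖b)`. -/
noncomputable def klBin (a b : ℝ) : ℝ :=
  a * Real.log (a / b) + (1 - a) * Real.log ((1 - a) / (1 - b))

lemma kl_le_chi (a b : ℝ) (ha : 0 < a) (ha1 : a < 1) (hb : 0 < b) (hb1 : b < 1) :
    klBin a b ≤ (a - b) ^ 2 / (b * (1 - b)) := by
  have h1 : Real.log (a / b) ≤ a / b - 1 :=
    Real.log_le_sub_one_of_pos (div_pos ha hb)
  have h2 : Real.log ((1 - a) / (1 - b)) ≤ (1 - a) / (1 - b) - 1 :=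
    Real.log_le_sub_one_of_pos (div_pos (by linarith) (by linarith))
  have hbne : b ≠ 0 := ne_of_gt hb
  have hbne1 : (1 : ℝ) - b ≠ 0 := by linarith
  have key : a * (a / b - 1) + (1 - a) * ((1 - a) / (1 - b) - 1)
      = (a - b) ^ 2 / (b * (1 - b)) := by
    rw [eq_div_iff (mul_ne_zero hbne hbne1)]
    field_simp
    ring
  have ha' : (0:ℝ) ≤ 1 - a := by linarith
  have t1 : a * Real.log (a / b) ≤ a * (a / b - 1) :=
    mul_le_mul_of_nonneg_left h1 ha.le
  have t2 : (1 - a) * Real.log ((1 - a) / (1 - b)) ≤ (1 - a) * ((1 - a) / (1 - b) - 1) :=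
    mul_le_mul_of_nonneg_left h2 ha'
  have this := add_le_add t1 t2
  calc klBin a b = a * Real.log (a / b) + (1 - a) * Real.log ((1 - a) / (1 - b)) := rfl
    _ ≤ a * (a / b - 1) + (1 - a) * ((1 - a) / (1 - b) - 1) := this
    _ = _ := key

lemma term_bound (δ ε : ℝ) (hδ0 : 0 < δ) (hδ1 : δ < 1) (hε : 0 ≤ ε)
    (x y u v : ℝ) (hx : x ∈ Set.Icc δ 1) (hy : y ∈ Set.Icc δ 1)
    (hu : u ∈ Set.Icc δ 1) (hv : v ∈ Set.Icc δ 1)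
    (h1 : |x - u| ≤ ε) (h2 : |y - v| ≤ ε) :
    klBin (y / (x + y)) (v / (u + v)) ≤ ε ^ 2 / (4 * δ ^ 2) * (2 + δ + 1 / δ) := by
  obtain ⟨hx1, hx2⟩ := hx; obtain ⟨hy1, hy2⟩ := hy
  obtain ⟨hu1, hu2⟩ := hu; obtain ⟨hv1, hv2⟩ := hv
  have hxy : 0 < x + y := by linarith
  have huv : 0 < u + v := by linarith
  set a := y / (x + y) with hadef
  set b := v / (u + v) with hbdef
  have ha : 0 < a := div_pos (by linarith) hxy
  have ha1 : a < 1 := (div_lt_one hxy).2 (by linarith)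
  have hb : 0 < b := div_pos (by linarith) huv
  have hb1 : b < 1 := (div_lt_one huv).2 (by linarith)
  have hchi := kl_le_chi a b ha ha1 hb hb1
  -- bound |a - b|
  have hab : |a - b| ≤ ε / (2 * δ) := by
    have heq : a - b = (y * (u - x) + x * (y - v)) / ((x + y) * (u + v)) := by
      rw [hadef, hbdef, eq_div_iff (ne_of_gt (mul_pos hxy huv))]
      field_simp
      ring
    rw [heq, abs_div, abs_of_pos (mul_pos hxy huv)]
    have hnum : |y * (u - x) + x * (y - v)| ≤ (x + y) * ε := by
      calc |y * (u - x) + x * (y - v)| ≤ |y * (u - x)| + |x * (y - v)| := abs_add_le _ _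
        _ = y * |u - x| + x * |y - v| := by
            rw [abs_mul, abs_mul, abs_of_pos (by linarith : (0:ℝ) < y),
              abs_of_pos (by linarith : (0:ℝ) < x)]
        _ ≤ y * ε + x * ε := by
            have := abs_sub_comm x u ▸ h1
            gcongr <;> linarith [abs_sub_comm u x ▸ h1]
        _ = (x + y) * ε := by ring
    calc |y * (u - x) + x * (y - v)| / ((x + y) * (u + v))
        ≤ (x + y) * ε / ((x + y) * (u + v)) := by gcongr
      _ = ε / (u + v) := by rw [mul_div_mul_left _ _ (ne_of_gt hxy)]
      _ ≤ ε / (2 * δ) := by gcongr; linarith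
  have hab2 : (a - b) ^ 2 ≤ ε ^ 2 / (4 * δ ^ 2) := by
    have := sq_abs (a - b) ▸ pow_le_pow_left₀ (abs_nonneg _) hab 2
    calc (a - b) ^ 2 ≤ (ε / (2 * δ)) ^ 2 := by rw [← sq_abs]; exact pow_le_pow_left₀ (abs_nonneg _) hab 2
      _ = ε ^ 2 / (4 * δ ^ 2) := by ring
  -- b (1-b) = u v / (u+v)^2
  have hbb : b * (1 - b) = u * v / (u + v) ^ 2 := by
    rw [hbdef]; field_simp; ring
  have hratio : (u + v) ^ 2 / (u * v) ≤ 2 + δ + 1 / δ := by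
    have huvpos : 0 < u * v := mul_pos (by linarith) (by linarith)
    have hfac : 0 ≤ (v - δ * u) * (u - δ * v) := by
      apply mul_nonneg <;> nlinarith
    have hδne : δ ≠ 0 := ne_of_gt hδ0
    have hcancel : δ * (1 / δ) = 1 := mul_one_div_cancel hδne
    have key2 : δ * ((2 + δ + 1 / δ) * (u * v)) = (2 * δ + δ ^ 2 + 1) * (u * v) := by
      linear_combination (u * v) * hcancel
    rw [div_le_iff₀ huvpos]
    have hmain : δ * ((u + v) ^ 2) ≤ δ * ((2 + δ + 1 / δ) * (u * v)) := by
      rw [key2]; nlinarith [hfac]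
    exact le_of_mul_le_mul_left hmain hδ0
  have hbbpos : 0 < b * (1 - b) := mul_pos hb (by linarith)
  calc klBin a b ≤ (a - b) ^ 2 / (b * (1 - b)) := hchi
    _ = (a - b) ^ 2 * ((u + v) ^ 2 / (u * v)) := by
        rw [hbb]; field_simp
    _ ≤ ε ^ 2 / (4 * δ ^ 2) * (2 + δ + 1 / δ) := by
        have h4 : (0:ℝ) ≤ ε ^ 2 / (4 * δ ^ 2) :=
          div_nonneg (sq_nonneg _) (by positivity)
        have h5 : (0:ℝ) ≤ (u + v) ^ 2 / (u * v) :=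
          div_nonneg (sq_nonneg _) (le_of_lt (mul_pos (by linarith) (by linarith)))
        exact mul_le_mul hab2 hratio h5 h4

/-- **The ε-covering bound** (Claim 1 of the paper): if the parameter vectors `β, γ ∈ [δ,1]^n`
are coordinate-wise within `(1−δ)/n^q` of each other, then the KL divergence between the
corresponding laws of the observations on a graph `G`, which equals
`k · Σ_{{i,j} ∈ G, i<j} D(β_j/(β_i+β_j) ‖ γ_j/(γ_i+γ_j))`, is at most
`((1−δ)²/(4δ²)) · (2 + δ + 1/δ) · k·|G| / n^{2q}`. -/
theorem covering_kl_bound (n : ℕ) (hn : 1 ≤ n) (δ q : ℝ)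
    (hδ : δ ∈ Set.Ioo (0 : ℝ) 1) (hq : 0 < q) (k : ℕ)
    (G : SimpleGraph (Fin n)) [DecidableRel G.Adj]
    (β γ : Fin n → ℝ) (hβ : ∀ i, β i ∈ Set.Icc δ 1) (hγ : ∀ i, γ i ∈ Set.Icc δ 1)
    (hclose : ∀ i, |β i - γ i| ≤ (1 - δ) / (n : ℝ) ^ q) :
    (k : ℝ) *
        ∑ e ∈ Finset.univ.filter (fun e : Fin n × Fin n => e.1 < e.2 ∧ G.Adj e.1 e.2),
          klBin (β e.2 / (β e.1 + β e.2)) (γ e.2 / (γ e.1 + γ e.2))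
      ≤ (1 - δ) ^ 2 / (4 * δ ^ 2) * (2 + δ + 1 / δ) *
          ((k : ℝ) * G.edgeFinset.card) / (n : ℝ) ^ (2 * q) := by
  obtain ⟨hδ0, hδ1⟩ := hδ
  have hn0 : (0 : ℝ) < (n : ℝ) := by exact_mod_cast hn
  have hnq : (0 : ℝ) < (n : ℝ) ^ q := Real.rpow_pos_of_pos hn0 q
  have hn2q : (0 : ℝ) < (n : ℝ) ^ (2 * q) := Real.rpow_pos_of_pos hn0 _
  set ε : ℝ := (1 - δ) / (n : ℝ) ^ q with hεdef
  have hε : 0 ≤ ε := div_nonneg (by linarith) hnq.le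
  -- identify ε² / n-power
  have hpow : ((n : ℝ) ^ q) ^ 2 = (n : ℝ) ^ (2 * q) := by
    rw [← Real.rpow_natCast ((n : ℝ) ^ q) 2, ← Real.rpow_mul hn0.le]
    norm_num [mul_comm]
  set C : ℝ := ε ^ 2 / (4 * δ ^ 2) * (2 + δ + 1 / δ) with hCdef
  have hC0 : 0 ≤ C := by
    apply mul_nonneg (div_nonneg (sq_nonneg _) (by positivity))
    have : 0 < 1 / δ := by positivity
    linarith
  have hCeq : C = (1 - δ) ^ 2 / (4 * δ ^ 2) * (2 + δ + 1 / δ) / (n : ℝ) ^ (2 * q) := by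
    rw [hCdef, hεdef, div_pow, hpow]
    ring
  set S := Finset.univ.filter (fun e : Fin n × Fin n => e.1 < e.2 ∧ G.Adj e.1 e.2) with hS
  -- per-term bound
  have hterm : ∀ e ∈ S, klBin (β e.2 / (β e.1 + β e.2)) (γ e.2 / (γ e.1 + γ e.2)) ≤ C := by
    intro e he
    exact term_bound δ ε hδ0 hδ1 hε _ _ _ _ (hβ e.1) (hβ e.2) (hγ e.1) (hγ e.2)
      (hclose e.1) (hclose e.2)
  have hsum : ∑ e ∈ S, klBin (β e.2 / (β e.1 + β e.2)) (γ e.2 / (γ e.1 + γ e.2))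
      ≤ (S.card : ℝ) * C := by
    calc ∑ e ∈ S, klBin (β e.2 / (β e.1 + β e.2)) (γ e.2 / (γ e.1 + γ e.2))
        ≤ ∑ _e ∈ S, C := Finset.sum_le_sum hterm
      _ = (S.card : ℝ) * C := by rw [Finset.sum_const, nsmul_eq_mul]
  -- card bound
  have hcard : S.card ≤ G.edgeFinset.card := by
    apply Finset.card_le_card_of_injOn (fun e => s(e.1, e.2))
    · intro e he
      rw [hS, Finset.mem_coe, Finset.mem_filter] at he
      rw [Finset.mem_coe, SimpleGraph.mem_edgeFinset, SimpleGraph.mem_edgeSet]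
      exact he.2.2
    · intro e he f hf hef
      rw [hS, Finset.mem_coe, Finset.mem_filter] at he hf
      simp only [Sym2.eq, Sym2.rel_iff', Prod.mk.injEq, Prod.swap_prod_mk] at hef
      rcases hef with ⟨h1, h2⟩ | ⟨h1, h2⟩
      · exact Prod.ext h1 h2
      · exfalso
        have := he.2.1
        have := hf.2.1
        omega
  -- put together
  have hkC : (k : ℝ) * ((S.card : ℝ) * C) ≤ (k : ℝ) * ((G.edgeFinset.card : ℝ) * C) := by
    have : (S.card : ℝ) ≤ (G.edgeFinset.card : ℝ) := by exact_mod_cast hcard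
    have hk0 : (0 : ℝ) ≤ (k : ℝ) := Nat.cast_nonneg k
    apply mul_le_mul_of_nonneg_left (mul_le_mul_of_nonneg_right this hC0) hk0
  calc (k : ℝ) * ∑ e ∈ S, klBin (β e.2 / (β e.1 + β e.2)) (γ e.2 / (γ e.1 + γ e.2))
      ≤ (k : ℝ) * ((S.card : ℝ) * C) :=
        mul_le_mul_of_nonneg_left hsum (Nat.cast_nonneg k)
    _ ≤ (k : ℝ) * ((G.edgeFinset.card : ℝ) * C) := hkC
    _ = (1 - δ) ^ 2 / (4 * δ ^ 2) * (2 + δ + 1 / δ) *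
          ((k : ℝ) * G.edgeFinset.card) / (n : ℝ) ^ (2 * q) := by
        rw [hCeq]; ring
end

section
/- For every δ ∈ (0,1), the maximum of the binary KL divergence D(a‖b) over all a, b ∈ [δ/(1+δ), 1/(1+δ)] equals D( 1/(1+δ) ‖ δ/(1+δ) ); in particular, D(a‖b) ≤ D( 1/(1+δ) ‖ δ/(1+δ) ) for all a, b in this interval. -/
lemma klBin_eq {a b : ℝ} (ha0 : 0 < a) (ha1 : a < 1) (hb0 : 0 < b) (hb1 : b < 1) :
    klBin a b = a * Real.log a + (1 - a) * Real.log (1 - a)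
      + a * (-Real.log b) + (1 - a) * (-Real.log (1 - b)) := by
  unfold klBin
  rw [Real.log_div ha0.ne' hb0.ne',
    Real.log_div (by linarith : (1:ℝ) - a ≠ 0) (by linarith : (1:ℝ) - b ≠ 0)]
  ring

lemma convexOn_affine (c d : ℝ) : ConvexOn ℝ (Set.Ioo (0:ℝ) 1) (fun x => c * x + d) := by
  refine ⟨convex_Ioo _ _, ?_⟩
  intro x _ y _ p q hp hq hpq
  simp only [smul_eq_mul]
  exact le_of_eq (by linear_combination (-d) * hpq)

lemma convexOn_mul_log_Ioo : ConvexOn ℝ (Set.Ioo (0:ℝ) 1) (fun x => x * Real.log x) :=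
  Real.convexOn_mul_log.subset (fun x hx => le_of_lt hx.1) (convex_Ioo _ _)

lemma convexOn_one_sub_mul_log : ConvexOn ℝ (Set.Ioo (0:ℝ) 1)
    (fun x => (1 - x) * Real.log (1 - x)) := by
  refine ⟨convex_Ioo _ _, ?_⟩
  intro x hx y hy p q hp hq hpq
  simp only [smul_eq_mul]
  have h1 : 1 - (p * x + q * y) = p * (1 - x) + q * (1 - y) := by nlinarith [hpq]
  rw [h1]
  have := Real.convexOn_mul_log.2 (x := 1 - x) (y := 1 - y)
    (by simp; linarith [hx.2]) (by simp; linarith [hy.2]) hp hq hpq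
  simpa using this

lemma convexOn_neg_log_Ioo : ConvexOn ℝ (Set.Ioo (0:ℝ) 1) (fun x => -Real.log x) :=
  ((strictConcaveOn_log_Ioi.concaveOn).subset (fun x hx => hx.1) (convex_Ioo _ _)).neg

lemma convexOn_neg_log_one_sub : ConvexOn ℝ (Set.Ioo (0:ℝ) 1)
    (fun x => -Real.log (1 - x)) := by
  refine ⟨convex_Ioo _ _, ?_⟩
  intro x hx y hy p q hp hq hpq
  simp only [smul_eq_mul]
  have h1 : 1 - (p * x + q * y) = p * (1 - x) + q * (1 - y) := by nlinarith [hpq]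
  rw [h1]
  have := convexOn_neg_log_Ioo.2 (x := 1 - x) (y := 1 - y)
    (⟨by linarith [hx.2], by linarith [hx.1]⟩) (⟨by linarith [hy.2], by linarith [hy.1]⟩)
    hp hq hpq
  simpa using this

/-- Convexity of `klBin a ·` (as the explicit formula) in the second variable. -/
lemma convexOn_snd (a : ℝ) (ha0 : 0 ≤ a) (ha1 : a ≤ 1) :
    ConvexOn ℝ (Set.Ioo (0:ℝ) 1)
      (fun b => a * Real.log a + (1 - a) * Real.log (1 - a)
        + a * (-Real.log b) + (1 - a) * (-Real.log (1 - b))) := by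
  have h1 := (convexOn_neg_log_Ioo.smul ha0)
  have h2 := (convexOn_neg_log_one_sub.smul (by linarith : (0:ℝ) ≤ 1 - a))
  have h3 := ((convexOn_const (a * Real.log a + (1 - a) * Real.log (1 - a))
    (convex_Ioo (0:ℝ) 1)).add h1).add h2
  exact h3

/-- Convexity of `klBin · b` (as the explicit formula) in the first variable. -/
lemma convexOn_fst (b : ℝ) :
    ConvexOn ℝ (Set.Ioo (0:ℝ) 1)
      (fun a => a * Real.log a + (1 - a) * Real.log (1 - a)
        + a * (-Real.log b) + (1 - a) * (-Real.log (1 - b))) := by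
  have h3 : ConvexOn ℝ (Set.Ioo (0:ℝ) 1)
      (fun a => (Real.log (1 - b) - Real.log b) * a + (-Real.log (1 - b))) :=
    convexOn_affine _ _
  have h := (convexOn_mul_log_Ioo.add convexOn_one_sub_mul_log).add h3
  refine h.congr fun a _ => ?_
  simp only [Pi.add_apply]
  ring

lemma klBin_le_max {L U a b : ℝ} (hL : 0 < L) (hU : U < 1)
    (ha : a ∈ Set.Icc L U) (hb : b ∈ Set.Icc L U) :
    klBin a b ≤ max (max (klBin L L) (klBin L U)) (max (klBin U L) (klBin U U)) := by
  have hLU : L ≤ U := le_trans ha.1 ha.2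
  have hmem : ∀ x : ℝ, x ∈ Set.Icc L U → x ∈ Set.Ioo (0:ℝ) 1 := by
    intro x hx
    exact ⟨lt_of_lt_of_le hL hx.1, lt_of_le_of_lt hx.2 hU⟩
  have haI := hmem a ha
  have hbI := hmem b hb
  have hLI := hmem L ⟨le_refl L, hLU⟩
  have hUI := hmem U ⟨hLU, le_refl U⟩
  -- step 1 : convexity in b
  have step1 : klBin a b ≤ max (klBin a L) (klBin a U) := by
    have h := (convexOn_snd a haI.1.le haI.2.le).le_on_segment hLI hUI
      (by rw [segment_eq_Icc hLU]; exact hb)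
    rw [klBin_eq haI.1 haI.2 hbI.1 hbI.2, klBin_eq haI.1 haI.2 hLI.1 hLI.2,
      klBin_eq haI.1 haI.2 hUI.1 hUI.2]
    exact h
  -- step 2 : convexity in a
  have step2 : ∀ c : ℝ, c ∈ Set.Ioo (0:ℝ) 1 →
      klBin a c ≤ max (klBin L c) (klBin U c) := by
    intro c hcI
    have h := (convexOn_fst c).le_on_segment hLI hUI
      (by rw [segment_eq_Icc hLU]; exact ha)
    rw [klBin_eq haI.1 haI.2 hcI.1 hcI.2, klBin_eq hLI.1 hLI.2 hcI.1 hcI.2,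
      klBin_eq hUI.1 hUI.2 hcI.1 hcI.2]
    exact h
  calc klBin a b ≤ max (klBin a L) (klBin a U) := step1
    _ ≤ max (max (klBin L L) (klBin U L)) (max (klBin L U) (klBin U U)) :=
        max_le_max (step2 L hLI) (step2 U hUI)
    _ ≤ max (max (klBin L L) (klBin L U)) (max (klBin U L) (klBin U U)) := by
        rw [max_le_iff]
        constructor
        · exact max_le (le_max_of_le_left (le_max_left _ _))
            (le_max_of_le_right (le_max_left _ _))
        · exact max_le (le_max_of_le_left (le_max_right _ _))
            (le_max_of_le_right (le_max_right _ _))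

/-- **Extremal value of the binary KL divergence on a symmetric interval**: for `δ ∈ (0,1)`,
the maximum of `D(a‖b)` over `a, b ∈ [δ/(1+δ), 1/(1+δ)]` is attained at
`a = 1/(1+δ)`, `b = δ/(1+δ)`. -/
theorem klBin_isGreatest (δ : ℝ) (hδ : δ ∈ Set.Ioo (0 : ℝ) 1) :
    IsGreatest
      ((fun q : ℝ × ℝ => klBin q.1 q.2) ''
        (Set.Icc (δ / (1 + δ)) (1 / (1 + δ)) ×ˢ Set.Icc (δ / (1 + δ)) (1 / (1 + δ))))
      (klBin (1 / (1 + δ)) (δ / (1 + δ))) := by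
  obtain ⟨hd0, hd1⟩ := hδ
  set L := δ / (1 + δ) with hLdef
  set U := 1 / (1 + δ) with hUdef
  have hpos : (0:ℝ) < 1 + δ := by linarith
  have hL : 0 < L := div_pos hd0 hpos
  have hLU : L ≤ U := by
    rw [hLdef, hUdef, div_le_div_iff₀ hpos hpos]
    nlinarith
  have hU1 : U < 1 := by
    rw [hUdef, div_lt_one hpos]; linarith
  have hUL : U = 1 - L := by
    rw [hUdef, hLdef]; field_simp; ring
  have hL1 : L < 1 := lt_of_le_of_lt hLU hU1
  have hU0 : 0 < U := lt_of_lt_of_le hL hLU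
  -- corner values
  have hLL : klBin L L = 0 := by
    unfold klBin
    rw [div_self hL.ne', div_self (by linarith : (1:ℝ) - L ≠ 0)]
    simp
  have hUU : klBin U U = 0 := by
    unfold klBin
    rw [div_self hU0.ne', div_self (by linarith : (1:ℝ) - U ≠ 0)]
    simp
  have hsym : klBin L U = klBin U L := by
    unfold klBin
    rw [hUL]
    ring_nf
  have hULnonneg : 0 ≤ klBin U L := by
    have h1 : klBin U L = (U - L) * Real.log (U / L) := by
      unfold klBin
      rw [hUL]
      have : (1:ℝ) - (1 - L) = L := by ring
      rw [this]
      rw [Real.log_div hL.ne' (by linarith : (1:ℝ) - L ≠ 0)]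
      rw [Real.log_div (by linarith : (1:ℝ) - L ≠ 0) hL.ne']
      ring
    rw [h1]
    apply mul_nonneg (by linarith)
    apply Real.log_nonneg
    rw [le_div_iff₀ hL]
    linarith
  constructor
  · exact ⟨(U, L), ⟨⟨hLU, le_refl U⟩, ⟨le_refl L, hLU⟩⟩, rfl⟩
  · rintro v ⟨⟨a, b⟩, ⟨ha, hb⟩, rfl⟩
    have h := klBin_le_max hL hU1 ha hb
    rw [hLL, hUU, hsym] at h
    have hmax : max (max 0 (klBin U L)) (max (klBin U L) 0) = klBin U L := by
      rw [max_eq_right hULnonneg, max_eq_left hULnonneg, max_self]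
    rwa [hmax] at h
end

section
/- Let n ≥ 2, δ ∈ (0,1), let α_1,…,α_n be i.i.d. uniform on [δ,1], and let π̃ = (π(1),…,π(n−1)) where π(i) = α_i/(α_1+⋯+α_n). Then for every Borel set A ⊆ ℝ^{n−1}: P(π̃ ∈ A) ≤ (n^{n−1}/(1−δ)^n) · λ(A), where λ denotes the Lebesgue measure on ℝ^{n−1}. Equivalently, the density of π̃ with respect to Lebesgue measure is (essentially) bounded above by n^{n−1}/(1−δ)^n. -/
open MeasureTheory ProbabilityTheory Set
open scoped ENNReal NNReal

noncomputable section

variable (m : ℕ)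

/-- The linear map `B w i = w i` for `i ≠ last`, `B w last = w last - ∑ w j.castSucc`. -/
def auxB : (Fin (m+1) → ℝ) →ₗ[ℝ] (Fin (m+1) → ℝ) where
  toFun w := fun i =>
    if i = Fin.last m then w (Fin.last m) - ∑ j : Fin m, w j.castSucc else w i
  map_add' w v := by
    funext i
    by_cases h : i = Fin.last m <;> simp [h, Finset.sum_add_distrib] <;> ring
  map_smul' c w := by
    funext i
    by_cases h : i = Fin.last m
    · simp only [h, if_pos rfl, Pi.smul_apply, smul_eq_mul, RingHom.id_apply, if_true]
      rw [mul_sub, Finset.mul_sum]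
    · simp [h]

/-- The derivative of `Psi` at `z`. -/
def auxL (z : Fin (m+1) → ℝ) : (Fin (m+1) → ℝ) →ₗ[ℝ] (Fin (m+1) → ℝ) where
  toFun h := fun i =>
    if i = Fin.last m then h (Fin.last m)
    else z (Fin.last m) * h i + h (Fin.last m) * z i
  map_add' w v := by
    funext i
    by_cases h : i = Fin.last m <;> simp [h] <;> ring
  map_smul' c w := by
    funext i
    by_cases h : i = Fin.last m <;> simp [h] <;> ring

def auxPsi : (Fin (m+1) → ℝ) → (Fin (m+1) → ℝ) := fun z i =>
  if i = Fin.last m then z (Fin.last m) else z (Fin.last m) * z i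

def auxPhi : (Fin (m+1) → ℝ) → (Fin (m+1) → ℝ) := fun z => auxB m (auxPsi m z)

lemma det_auxB : LinearMap.det (auxB m) = 1 := by
  rw [← LinearMap.det_toMatrix' (auxB m)]
  rw [Matrix.det_of_lowerTriangular]
  · apply Finset.prod_eq_one
    intro i _
    by_cases h : i = Fin.last m
    · simp only [LinearMap.toMatrix'_apply, auxB, h, LinearMap.coe_mk, AddHom.coe_mk,
        if_pos rfl]
      rw [Finset.sum_eq_zero fun j _ => Pi.single_eq_of_ne (Fin.castSucc_lt_last j).ne 1]
      simp
    · simp [LinearMap.toMatrix'_apply, auxB, h]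
  · intro i j hij
    have hlt : i < j := hij
    have hine : i ≠ Fin.last m := by
      intro h; exact absurd (h ▸ hlt) (not_lt.mpr (Fin.le_last j))
    simp [LinearMap.toMatrix'_apply, auxB, hine, hlt.ne]

lemma det_auxL (z : Fin (m+1) → ℝ) :
    LinearMap.det (auxL m z) = z (Fin.last m) ^ m := by
  rw [← LinearMap.det_toMatrix' (auxL m z)]
  rw [Matrix.det_of_upperTriangular]
  · rw [Fin.prod_univ_castSucc]
    have h1 : ∀ j : Fin m, (LinearMap.toMatrix' (auxL m z)) j.castSucc j.castSucc
        = z (Fin.last m) := by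
      intro j
      simp [LinearMap.toMatrix'_apply, auxL, (Fin.castSucc_lt_last _).ne,
        (Fin.castSucc_lt_last j).ne']
    have h2 : (LinearMap.toMatrix' (auxL m z)) (Fin.last m) (Fin.last m) = 1 := by
      simp [LinearMap.toMatrix'_apply, auxL]
    rw [h2, Finset.prod_congr rfl (fun j _ => h1 j)]
    simp
  · intro i j hij
    have hlt : j < i := hij
    have hjne : j ≠ Fin.last m := by
      intro h; exact absurd (h ▸ hlt) (not_lt.mpr (Fin.le_last i))
    by_cases h : i = Fin.last m
    · simp [LinearMap.toMatrix'_apply, auxL, h, hjne, Ne.symm hjne]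
    · simp [LinearMap.toMatrix'_apply, auxL, h, hjne, hlt.ne', Ne.symm hjne]

lemma continuous_auxPsi : Continuous (auxPsi m) := by
  apply continuous_pi
  intro i
  by_cases h : i = Fin.last m
  · simp only [auxPsi, if_pos h]
    exact continuous_apply _
  · simp only [auxPsi, if_neg h]
    exact (continuous_apply _).mul (continuous_apply _)

lemma hasFDerivAt_auxPsi (z : Fin (m+1) → ℝ) :
    HasFDerivAt (auxPsi m) ((auxL m z).toContinuousLinearMap) z := by
  apply hasFDerivAt_pi''
  intro i
  by_cases h : i = Fin.last m
  · subst h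
    have hfun : (fun w : Fin (m+1) → ℝ => auxPsi m w (Fin.last m))
        = fun w => w (Fin.last m) := funext fun w => if_pos rfl
    rw [hfun]
    have h1 : HasFDerivAt (fun w : Fin (m+1) → ℝ => w (Fin.last m))
        (ContinuousLinearMap.proj (R := ℝ) (φ := fun _ : Fin (m+1) => ℝ) (Fin.last m)) z :=
      (ContinuousLinearMap.proj (R := ℝ) (φ := fun _ : Fin (m+1) => ℝ)
        (Fin.last m)).hasFDerivAt
    refine h1.congr_fderiv ?_
    apply ContinuousLinearMap.ext
    intro w
    simp [auxL]
  · have hfun : (fun w : Fin (m+1) → ℝ => auxPsi m w i)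
        = fun w => w (Fin.last m) * w i := funext fun w => if_neg h
    rw [hfun]
    have h1 : HasFDerivAt (fun w : Fin (m+1) → ℝ => w (Fin.last m))
        (ContinuousLinearMap.proj (R := ℝ) (φ := fun _ : Fin (m+1) => ℝ) (Fin.last m)) z :=
      (ContinuousLinearMap.proj (R := ℝ) (φ := fun _ : Fin (m+1) => ℝ)
        (Fin.last m)).hasFDerivAt
    have h2 : HasFDerivAt (fun w : Fin (m+1) → ℝ => w i)
        (ContinuousLinearMap.proj (R := ℝ) (φ := fun _ : Fin (m+1) => ℝ) i) z :=
      (ContinuousLinearMap.proj (R := ℝ) (φ := fun _ : Fin (m+1) => ℝ) i).hasFDerivAt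
    refine (h1.mul h2).congr_fderiv ?_
    apply ContinuousLinearMap.ext
    intro w
    simp [auxL, h]
    ring

/-- The derivative of `auxPhi`. -/
def auxD (z : Fin (m+1) → ℝ) : (Fin (m+1) → ℝ) →L[ℝ] (Fin (m+1) → ℝ) :=
  (LinearMap.toContinuousLinearMap (auxB m)).comp
    (LinearMap.toContinuousLinearMap (auxL m z))

lemma hasFDerivAt_auxPhi (z : Fin (m+1) → ℝ) :
    HasFDerivAt (auxPhi m) (auxD m z) z := by
  have h1 : HasFDerivAt (LinearMap.toContinuousLinearMap (auxB m))
      (LinearMap.toContinuousLinearMap (auxB m)) (auxPsi m z) :=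
    (LinearMap.toContinuousLinearMap (auxB m)).hasFDerivAt
  have := h1.comp z (hasFDerivAt_auxPsi m z)
  apply this.congr_of_eventuallyEq
  filter_upwards with w
  simp [auxPhi, Function.comp, LinearMap.coe_toContinuousLinearMap']

lemma det_auxD (z : Fin (m+1) → ℝ) : (auxD m z).det = z (Fin.last m) ^ m := by
  have : ((auxD m z) : (Fin (m+1) → ℝ) →ₗ[ℝ] (Fin (m+1) → ℝ))
      = (auxB m).comp (auxL m z) := by
    ext w
    simp [auxD, LinearMap.coe_toContinuousLinearMap']
  rw [ContinuousLinearMap.det, this, LinearMap.det_comp, det_auxB, det_auxL, one_mul]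

end

section Core

lemma aux_sum_phi (m : ℕ) (z : Fin (m+1) → ℝ) :
    ∑ i, auxPhi m z i = z (Fin.last m) := by
  have h1 : ∀ j : Fin m, auxPhi m z j.castSucc = auxPsi m z j.castSucc := by
    intro j
    simp only [auxPhi, auxB, LinearMap.coe_mk, AddHom.coe_mk,
      if_neg (Fin.castSucc_lt_last j).ne]
  have h2 : auxPhi m z (Fin.last m)
      = auxPsi m z (Fin.last m) - ∑ j : Fin m, auxPsi m z j.castSucc := by
    simp [auxPhi, auxB]
  rw [Fin.sum_univ_castSucc, Finset.sum_congr rfl fun j _ => h1 j, h2]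
  simp [auxPsi]

lemma aux_core (m : ℕ) {δ : ℝ} (hδ : δ ∈ Set.Ioo (0:ℝ) 1)
    (A : Set (Fin m → ℝ)) (hA : MeasurableSet A) :
    volume ({x : Fin (m+1) → ℝ | (fun j : Fin m => x j.castSucc / ∑ i, x i) ∈ A}
        ∩ Set.pi Set.univ (fun _ => Icc δ 1))
      ≤ ENNReal.ofReal ((m+1 : ℝ) ^ m) * volume A := by
  set cube : Set (Fin (m+1) → ℝ) := Set.pi Set.univ (fun _ => Icc δ 1) with hcube_def
  have hcube : MeasurableSet cube := MeasurableSet.univ_pi fun _ => measurableSet_Icc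
  have hPhiCont : Continuous (auxPhi m) :=
    (LinearMap.toContinuousLinearMap (auxB m)).continuous.comp (continuous_auxPsi m)
  have hprojmeas : Measurable (fun z : Fin (m+1) → ℝ => fun j : Fin m => z j.castSucc) :=
    measurable_pi_lambda _ fun j => measurable_pi_apply _
  set E : Set (Fin (m+1) → ℝ) :=
    auxPhi m ⁻¹' cube ∩ (fun z : Fin (m+1) → ℝ => fun j : Fin m => z j.castSucc) ⁻¹' A
    with hE_def
  have hE : MeasurableSet E := (hPhiCont.measurable hcube).inter (hprojmeas hA)
  -- the target set is contained in the image of E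
  have hsubset : {x : Fin (m+1) → ℝ | (fun j : Fin m => x j.castSucc / ∑ i, x i) ∈ A}
      ∩ cube ⊆ auxPhi m '' E := by
    rintro x ⟨hxA, hxcube⟩
    have hxpos : ∀ i, δ ≤ x i ∧ x i ≤ 1 := fun i => hxcube i (Set.mem_univ i)
    have hS : 0 < ∑ i, x i :=
      Finset.sum_pos (fun i _ => lt_of_lt_of_le hδ.1 (hxpos i).1) Finset.univ_nonempty
    set S := ∑ i, x i with hS_def
    set z : Fin (m+1) → ℝ := fun i => if i = Fin.last m then S else x i / S with hz_def
    have hPsi : auxPsi m z = fun i => if i = Fin.last m then S else x i := by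
      funext i
      by_cases h : i = Fin.last m
      · simp [auxPsi, h, hz_def]
      · simp only [auxPsi, if_neg h, hz_def, if_pos rfl]
        rw [mul_comm]
        exact div_mul_cancel₀ _ hS.ne'
    have hPhix : auxPhi m z = x := by
      funext i
      simp only [auxPhi, auxB, LinearMap.coe_mk, AddHom.coe_mk, hPsi]
      by_cases h : i = Fin.last m
      · subst h
        have hsum : ∀ j : Fin m,
            (if (j.castSucc : Fin (m+1)) = Fin.last m then S else x j.castSucc)
              = x j.castSucc := fun j => if_neg (Fin.castSucc_lt_last j).ne
        simp only [if_pos rfl, hsum]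
        have hSsum : S = ∑ j : Fin m, x j.castSucc + x (Fin.last m) := by
          rw [hS_def, Fin.sum_univ_castSucc]
        simp only [if_true]
        rw [hSsum]; ring
      · rw [if_neg h, if_neg h]
    refine ⟨z, ⟨?_, ?_⟩, hPhix⟩
    · show auxPhi m z ∈ cube
      rw [hPhix]; exact hxcube
    · show (fun j : Fin m => z j.castSucc) ∈ A
      have : (fun j : Fin m => z j.castSucc) = fun j : Fin m => x j.castSucc / S := by
        funext j
        simp [hz_def, if_neg (Fin.castSucc_lt_last j).ne]
      rw [this]; exact hxA
  -- z (last) is between 0 and m+1 on E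
  have hlastmem : ∀ z ∈ E, z (Fin.last m) ∈ Icc (0:ℝ) (m+1) := by
    rintro z ⟨hz1, -⟩
    have hz1' : ∀ i, δ ≤ auxPhi m z i ∧ auxPhi m z i ≤ 1 := fun i => hz1 i (Set.mem_univ i)
    rw [← aux_sum_phi m z]
    constructor
    · exact Finset.sum_nonneg fun i _ => le_trans hδ.1.le (hz1' i).1
    · calc ∑ i, auxPhi m z i ≤ ∑ _i : Fin (m+1), (1:ℝ) :=
            Finset.sum_le_sum fun i _ => (hz1' i).2
        _ = (m+1 : ℝ) := by simp
  set e := MeasurableEquiv.piFinSuccAbove (fun _ : Fin (m+1) => ℝ) (Fin.last m) with he_def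
  set E' : Set (Fin (m+1) → ℝ) := e ⁻¹' (Icc (0:ℝ) (m+1) ×ˢ A) with hE'_def
  have hEE' : E ⊆ E' := by
    intro z hz
    have h1 : z (Fin.last m) ∈ Icc (0:ℝ) (m+1) := hlastmem z hz
    have h2 : (fun j : Fin m => z ((Fin.last m).succAbove j)) ∈ A := by
      have : (fun j : Fin m => z ((Fin.last m).succAbove j))
          = fun j : Fin m => z j.castSucc := by
        funext j; rw [Fin.succAbove_last]
      rw [this]; exact hz.2
    exact ⟨h1, h2⟩
  calc
    volume ({x : Fin (m+1) → ℝ | (fun j : Fin m => x j.castSucc / ∑ i, x i) ∈ A} ∩ cube)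
        ≤ volume (auxPhi m '' E) := measure_mono hsubset
    _ ≤ ∫⁻ z in E, ENNReal.ofReal |(auxD m z).det| :=
        addHaar_image_le_lintegral_abs_det_fderiv volume hE
          (fun z _ => (hasFDerivAt_auxPhi m z).hasFDerivWithinAt)
    _ = ∫⁻ z in E, ENNReal.ofReal (|z (Fin.last m)| ^ m) := by
        apply lintegral_congr
        intro z
        rw [det_auxD, abs_pow]
    _ ≤ ∫⁻ z in E', ENNReal.ofReal (|z (Fin.last m)| ^ m) := lintegral_mono_set hEE'
    _ = ∫⁻ p in Icc (0:ℝ) (m+1) ×ˢ A, ENNReal.ofReal (|p.1| ^ m) := by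
        rw [hE'_def]
        exact (volume_preserving_piFinSuccAbove (fun _ : Fin (m+1) => ℝ)
          (Fin.last m)).setLIntegral_comp_preimage_emb
          (MeasurableEquiv.measurableEmbedding e)
          (fun p => ENNReal.ofReal (|p.1| ^ m)) _
    _ = (∫⁻ s in Icc (0:ℝ) (m+1), ENNReal.ofReal (|s| ^ m)) * volume A := by
        rw [Measure.volume_eq_prod, ← Measure.prod_restrict]
        have hmeas : AEMeasurable (fun s : ℝ => ENNReal.ofReal (|s| ^ m))
            (volume.restrict (Icc (0:ℝ) (m+1))) :=
          (ENNReal.measurable_ofReal.comp ((measurable_norm).pow_const m)).aemeasurable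
        have := lintegral_prod_mul (μ := volume.restrict (Icc (0:ℝ) (m+1)))
          (ν := volume.restrict A) hmeas
          (aemeasurable_const (b := (1:ℝ≥0∞)))
        simp only [mul_one] at this
        rw [this, lintegral_one, Measure.restrict_apply_univ]
        
    _ ≤ ENNReal.ofReal ((m+1 : ℝ) ^ m) * volume A := by
        apply mul_le_mul_left
        have hIoc : (∫⁻ s in Icc (0:ℝ) (m+1), ENNReal.ofReal (|s| ^ m))
            = ∫⁻ s in Ioc (0:ℝ) (m+1), ENNReal.ofReal (|s| ^ m) :=
          (setLIntegral_congr Ioc_ae_eq_Icc).symm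
        rw [hIoc]
        have hfun : (∫⁻ s in Ioc (0:ℝ) (m+1), ENNReal.ofReal (|s| ^ m))
            = ∫⁻ s in Ioc (0:ℝ) (m+1), ENNReal.ofReal (s ^ m) := by
          apply setLIntegral_congr_fun measurableSet_Ioc
          intro s hs
          simp only
          rw [abs_of_pos hs.1]
        rw [hfun]
        have hint : IntegrableOn (fun s : ℝ => s ^ m) (Ioc (0:ℝ) (m+1)) volume :=
          (continuous_pow m).integrableOn_Ioc
        rw [← ofReal_integral_eq_lintegral_ofReal hint
          (ae_restrict_of_forall_mem measurableSet_Ioc fun s hs => pow_nonneg hs.1.le m)]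
        apply le_of_eq
        apply congrArg
        have h0le : (0:ℝ) ≤ (m+1 : ℝ) := by positivity
        rw [← intervalIntegral.integral_of_le h0le, integral_pow]
        rw [zero_pow (Nat.succ_ne_zero m), sub_zero, pow_succ, mul_div_assoc]
        rw [div_self (by positivity : ((m:ℝ)+1) ≠ 0), mul_one]

end Core

/-- **Bound on the density of the scaled skill parameters** (Lemma on the mode of the joint
PDF of `π̃`): if `α_1,…,α_n` are i.i.d. uniform on `[δ,1]` and
`π̃ = (π(1),…,π(n−1))` with `π(i) = α_i/(α_1+⋯+α_n)`, then the law of `π̃` is bounded by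
`n^{n−1}/(1−δ)^n` times Lebesgue measure on `ℝ^{n−1}`. -/
theorem density_bound_scaled_skills (n : ℕ) (hn : 2 ≤ n) (δ : ℝ) (hδ : δ ∈ Set.Ioo (0 : ℝ) 1)
    {Ω : Type} [MeasurableSpace Ω] (P : Measure Ω) [IsProbabilityMeasure P]
    (α : Fin n → Ω → ℝ) (hmeas : ∀ i, Measurable (α i))
    (hindep : iIndepFun α P)
    (hunif : ∀ i, Measure.map (α i) P =
      ENNReal.ofReal ((1 - δ)⁻¹) • volume.restrict (Set.Icc δ 1)) :
    ∀ A : Set (Fin (n - 1) → ℝ), MeasurableSet A →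
      P {ω | (fun i : Fin (n - 1) => α (Fin.castLE (Nat.sub_le n 1) i) ω / ∑ j, α j ω) ∈ A}
        ≤ ENNReal.ofReal ((n : ℝ) ^ (n - 1) / (1 - δ) ^ n) * volume A := by
  obtain ⟨m, rfl⟩ : ∃ m, n = m + 1 := ⟨n - 1, by omega⟩
  intro A hA
  have h1δ : 0 < 1 - δ := by linarith [hδ.2]
  set c : ℝ≥0∞ := ENNReal.ofReal ((1 - δ)⁻¹) with hc
  haveI hfin : IsFiniteMeasure (c • volume.restrict (Icc δ 1) : Measure ℝ) := by
    constructor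
    simp only [Measure.smul_apply, Measure.restrict_apply_univ, smul_eq_mul]
    rw [Real.volume_Icc]
    exact ENNReal.mul_lt_top ENNReal.ofReal_lt_top ENNReal.ofReal_lt_top
  haveI hsf : SigmaFinite (c • volume.restrict (Icc δ 1) : Measure ℝ) :=
    @IsFiniteMeasure.toSigmaFinite _ _ _ hfin
  set J : Ω → (Fin (m+1) → ℝ) := fun ω i => α i ω with hJ
  have hJmeas : Measurable J := measurable_pi_lambda _ fun i => hmeas i
  set G : (Fin (m+1) → ℝ) → (Fin m → ℝ) :=
    fun x => fun j : Fin m => x (Fin.castLE (Nat.sub_le (m+1) 1) j) / ∑ i, x i with hG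
  have hGmeas : Measurable G := measurable_pi_lambda _ fun j =>
    (measurable_pi_apply _).div
      (Finset.measurable_sum Finset.univ fun i _ => measurable_pi_apply i)
  have hmap : Measure.pi (fun _ : Fin (m+1) => c • volume.restrict (Icc δ 1)) = Measure.map J P := by
    refine Measure.pi_eq fun s hs => ?_
    rw [Measure.map_apply hJmeas (MeasurableSet.univ_pi hs)]
    have hpre : J ⁻¹' Set.pi Set.univ s = ⋂ i, α i ⁻¹' s i := by
      ext ω
      simp [hJ, Set.mem_pi]
    rw [hpre, hindep.meas_iInter (s := fun i => α i ⁻¹' s i) fun i => ⟨s i, hs i, rfl⟩]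
    apply Finset.prod_congr rfl
    intro i _
    rw [← Measure.map_apply (hmeas i) (hs i), hunif i]
  set cube : Set (Fin (m+1) → ℝ) := Set.pi Set.univ (fun _ => Icc δ 1) with hcubedef
  have hcubemeas : MeasurableSet cube := MeasurableSet.univ_pi fun _ => measurableSet_Icc
  have hcube : Measure.pi (fun _ : Fin (m+1) => c • volume.restrict (Icc δ 1)) = (c ^ (m+1)) • volume.restrict cube := by
    refine Measure.pi_eq fun s hs => ?_
    simp only [Measure.smul_apply, smul_eq_mul]
    rw [Measure.restrict_apply (MeasurableSet.univ_pi hs), hcubedef,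
      ← Set.pi_inter_distrib, volume_pi_pi]
    have hνi : ∀ i : Fin (m+1), (c • volume.restrict (Icc δ 1) : Measure ℝ) (s i)
        = c * volume (s i ∩ Icc δ 1) := by
      intro i
      simp [Measure.smul_apply, Measure.restrict_apply (hs i), smul_eq_mul]
    have h2 : ∀ i : Fin (m+1), (volume.restrict (Icc δ 1)) (s i) = volume (s i ∩ Icc δ 1) :=
      fun i => Measure.restrict_apply (hs i)
    simp only [h2, Finset.prod_mul_distrib, Finset.prod_const, Finset.card_univ,
      Fintype.card_fin]
  have hGA : G ⁻¹' A = {x : Fin (m+1) → ℝ | (fun j : Fin m => x j.castSucc / ∑ i, x i) ∈ A} := by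
    rfl
  calc
    P {ω | (fun i : Fin (m+1-1) => α (Fin.castLE (Nat.sub_le (m+1) 1) i) ω / ∑ j, α j ω) ∈ A}
        = (Measure.map J P) (G ⁻¹' A) := by
          rw [Measure.map_apply hJmeas (hGmeas hA)]
          rfl
    _ = (Measure.pi (fun _ : Fin (m+1) => c • volume.restrict (Icc δ 1))) (G ⁻¹' A) := by rw [hmap]
    _ = c ^ (m+1) * volume (G ⁻¹' A ∩ cube) := by
          rw [hcube]
          simp only [Measure.smul_apply, smul_eq_mul]
          rw [Measure.restrict_apply (hGmeas hA)]
    _ ≤ c ^ (m+1) * (ENNReal.ofReal ((m+1 : ℝ) ^ m) * volume A) := by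
          apply mul_le_mul_right
          rw [hGA]
          exact aux_core m hδ A hA
    _ = ENNReal.ofReal (((m+1 : ℕ) : ℝ) ^ (m + 1 - 1) / (1 - δ) ^ (m+1)) * volume A := by
          rw [← mul_assoc]
          congr 1
          rw [hc, ← ENNReal.ofReal_pow (inv_nonneg.mpr h1δ.le),
            ← ENNReal.ofReal_mul (by positivity)]
          congr 1
          rw [inv_pow]
          rw [Nat.add_sub_cancel]
          push_cast
          rw [div_eq_mul_inv, mul_comm]
end
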